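/- For every k > 0 and every r > 0 there exist infinitely many natural numbers N such that any two distinct lattice points l, l' ∈ ℤ³ satisfying N − k ≤ |l|² ≤ N + k and N − k ≤ |l'|² ≤ N + k must satisfy |l − l'| > r; equivalently, (C^k_N − C^k_N) ∩ B_r = {0} for infinitely many N. -/

import Mathlib

set_option maxHeartbeats 2000000

lemma mps_cross_lemma {F : Type*} [Field F] (w1 w2 w3 e1 e2 e3 : F)
    (h1 : w1^2 + w2^2 + w3^2 = 0) (h2 : w1*e1 + w2*e2 + w3*e3 = 0)
    (hneg : ¬ IsSquare (-1 : F))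
    (hE : IsSquare (e1^2 + e2^2 + e3^2)) (hE0 : e1^2 + e2^2 + e3^2 ≠ 0) :
    w1 = 0 ∧ w2 = 0 ∧ w3 = 0 := by
  obtain ⟨s, hs⟩ := hE
  have hs0 : s ≠ 0 := by
    rintro rfl
    rw [mul_zero] at hs
    exact hE0 hs
  have main : ∀ w u : F, u^2 = -(e1^2 + e2^2 + e3^2) * w^2 → w = 0 := by
    intro w u hu
    by_contra hw
    apply hneg
    refine ⟨u / (w * s), ?_⟩
    have hws : w * s ≠ 0 := mul_ne_zero hw hs0
    field_simp
    linear_combination -hu + w^2 * hs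
  refine ⟨main w1 (w2*e3 - w3*e2) ?_, main w2 (w3*e1 - w1*e3) ?_, main w3 (w1*e2 - w2*e1) ?_⟩
  · linear_combination (e2^2 + e3^2) * h1 - (w2*e2 + w3*e3 - w1*e1) * h2
  · linear_combination (e1^2 + e3^2) * h1 - (w1*e1 + w3*e3 - w2*e2) * h2
  · linear_combination (e1^2 + e2^2) * h1 - (w1*e1 + w2*e2 - w3*e3) * h2

lemma mps_prime_isSquare {P q : ℕ} [Fact P.Prime] (hq : q.Prime) (hP8 : P % 8 = 7)
    (h : q ≠ 2 → (P : ZMod q) = -1) : IsSquare ((q : ℕ) : ZMod P) := by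
  have hP2 : P ≠ 2 := by intro h2; rw [h2] at hP8; norm_num at hP8
  have hP4 : P % 4 = 3 := by omega
  rcases eq_or_ne q 2 with rfl | hq2
  · exact (ZMod.exists_sq_eq_two_iff hP2).mpr (Or.inr hP8)
  · have : Fact q.Prime := ⟨hq⟩
    have hPq : ((P : ℕ) : ZMod q) = -1 := h hq2
    have hq_odd : q % 2 = 1 := (Nat.Prime.mod_two_eq_one_iff_ne_two hq).mpr hq2
    have hqP : q ≠ P := by
      rintro rfl
      rw [ZMod.natCast_self] at hPq
      have : (1 : ZMod q) = 0 := by rw [← neg_neg (1 : ZMod q), ← hPq, neg_zero]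
      exact one_ne_zero this
    have hq4 : q % 4 = 1 ∨ q % 4 = 3 := by omega
    rcases hq4 with hq4 | hq4
    · rw [← ZMod.exists_sq_eq_prime_iff_of_mod_four_eq_one hq4 hP2, hPq]
      exact ZMod.exists_sq_eq_neg_one_iff.mpr (by omega)
    · rw [ZMod.exists_sq_eq_prime_iff_of_mod_four_eq_three hP4 hq4 (Ne.symm hqP), hPq]
      intro hcon
      exact (ZMod.exists_sq_eq_neg_one_iff.mp hcon) (by omega)

lemma mps_isSquare_all {P R : ℕ} [Fact P.Prime] (hP8 : P % 8 = 7)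
    (h : ∀ q : ℕ, q.Prime → q ≤ R → q ≠ 2 → (P : ZMod q) = -1) :
    ∀ D : ℕ, D ≠ 0 → D ≤ R → IsSquare ((D : ℕ) : ZMod P) := by
  intro D
  induction D using Nat.strong_induction_on with
  | _ D ih =>
    intro hD0 hDR
    rcases eq_or_ne D 1 with rfl | hD1
    · simp only [Nat.cast_one]; exact (IsSquare.one : IsSquare (1 : ZMod P))
    · have hq := Nat.minFac_prime hD1
      have hdvd := Nat.minFac_dvd D
      have hDpos : 0 < D := Nat.pos_of_ne_zero hD0
      have hlt : D / D.minFac < D := Nat.div_lt_self hDpos hq.one_lt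
      have h1 : IsSquare ((D.minFac : ℕ) : ZMod P) :=
        mps_prime_isSquare hq hP8 (h _ hq (le_trans (Nat.minFac_le hDpos) hDR))
      have hne0 : D / D.minFac ≠ 0 := by
        have := Nat.div_pos (Nat.le_of_dvd hDpos hdvd) hq.pos
        omega
      have h2 : IsSquare ((D / D.minFac : ℕ) : ZMod P) :=
        ih _ hlt hne0 (le_trans (Nat.div_le_self _ _) hDR)
      have hD : D = D.minFac * (D / D.minFac) := (Nat.mul_div_cancel' hdvd).symm
      rw [hD]
      push_cast
      exact h1.mul h2

/-- The Mallet-Paret–Sell lattice lemma: for every `k > 0` and `r > 0` there are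
infinitely many `N : ℕ` such that any two distinct lattice points `l, l'` of `ℤ³`
in the spherical shell `N - k ≤ |l|² ≤ N + k` satisfy `|l - l'| > r`. -/
theorem mallet_paret_sell_lattice_lemma (k r : ℝ) (hk : 0 < k) (hr : 0 < r) :
    {N : ℕ | ∀ l l' : Fin 3 → ℤ,
      ((N : ℝ) - k ≤ ∑ i, (l i : ℝ) ^ 2 ∧ (∑ i, (l i : ℝ) ^ 2) ≤ (N : ℝ) + k) →
      ((N : ℝ) - k ≤ ∑ i, (l' i : ℝ) ^ 2 ∧ (∑ i, (l' i : ℝ) ^ 2) ≤ (N : ℝ) + k) →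
      l ≠ l' →
      r < Real.sqrt (∑ i, ((l i : ℝ) - (l' i : ℝ)) ^ 2)}.Infinite := by
  classical
  set k₀ : ℕ := ⌈k⌉₊ + 1 with hk₀def
  set R : ℕ := ⌈r^2⌉₊ + 1 with hRdef
  set T : ℕ := k₀ + R with hTdef
  have hkk₀ : k ≤ (k₀ : ℝ) := le_trans (Nat.le_ceil k) (by exact_mod_cast Nat.le_succ _)
  have hkk₀' : k ≤ (⌈k⌉₊ : ℝ) + 1 := by linarith only [Nat.le_ceil k]
  have hrR : r^2 ≤ (R : ℝ) := le_trans (Nat.le_ceil _) (by exact_mod_cast Nat.le_succ _)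
  set L : ℕ := 8 * R.factorial with hLdef
  have hL0 : L ≠ 0 := by
    have := R.factorial_pos
    positivity
  haveI : NeZero L := ⟨hL0⟩
  have hdir : {P : ℕ | P.Prime ∧ (P : ZMod L) = -1}.Infinite :=
    Nat.infinite_setOfPred_prime_and_eq_mod (IsUnit.neg isUnit_one)
  have hinf : ({P : ℕ | P.Prime ∧ (P : ZMod L) = -1} \ Set.Iic R).Infinite :=
    hdir.diff (Set.finite_Iic R)
  have emb : ℕ ↪ ↥({P : ℕ | P.Prime ∧ (P : ZMod L) = -1} \ Set.Iic R) := hinf.natEmbedding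
  -- the prime attached to each triple (i, D, t)
  set p : ℕ × ℕ × ℤ → ℕ := fun j => (emb (Encodable.encode j) : ℕ) with hpdef
  have hp_prime : ∀ j, (p j).Prime := fun j => ((emb (Encodable.encode j)).2.1).1
  have hp_mod : ∀ j, ((p j : ℕ) : ZMod L) = -1 := fun j => ((emb (Encodable.encode j)).2.1).2
  have hp_gt : ∀ j, R < p j := by
    intro j
    have := (emb (Encodable.encode j)).2.2
    simpa [Set.mem_Iic, not_le] using this
  have hp_inj : Function.Injective p := by
    intro j j' h
    exact Encodable.encode_injective (emb.injective (Subtype.val_injective h))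
  -- P % 8 = 7 and P ≡ -1 mod every odd prime q ≤ R
  have hp8 : ∀ j, (p j) % 8 = 7 := by
    intro j
    have h8L : (8 : ℕ) ∣ L := ⟨R.factorial, rfl⟩
    have := congrArg (ZMod.castHom h8L (ZMod 8)) (hp_mod j)
    rw [map_natCast, map_neg, map_one] at this
    have h7 : ((p j : ℕ) : ZMod 8) = ((7 : ℕ) : ZMod 8) := by rw [this]; decide
    have h77 : (p j) % 8 = 7 % 8 := (ZMod.natCast_eq_natCast_iff _ _ _).mp h7
    omega
  have hpq : ∀ j, ∀ q : ℕ, q.Prime → q ≤ R → q ≠ 2 → ((p j : ℕ) : ZMod q) = -1 := by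
    intro j q hq hqR _
    have hqL : q ∣ L := Dvd.dvd.mul_left (Nat.dvd_factorial hq.pos hqR) 8
    have := congrArg (ZMod.castHom hqL (ZMod q)) (hp_mod j)
    rwa [map_natCast, map_neg, map_one] at this
  -- the CRT data
  set S : Finset (ℕ × ℕ × ℤ) :=
    Finset.range (2*k₀+1) ×ˢ (Finset.Icc 1 R ×ˢ Finset.Icc (-(T:ℤ)) (T:ℤ)) with hSdef
  set s : ℕ × ℕ × ℤ → ℕ := fun j => (p j)^2 with hsdef
  set ρ : (j : ℕ × ℕ × ℤ) → ZMod (s j) := fun j =>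
    ((j.2.1 : ZMod (s j)))⁻¹ * ((p j : ZMod (s j)) + (j.2.2 : ZMod (s j))^2)
      + (k₀ : ZMod (s j)) - (j.1 : ZMod (s j)) with hρdef
  set a : ℕ × ℕ × ℤ → ℕ := fun j => (ρ j).val with hadef
  have hs_ne : ∀ j ∈ S, s j ≠ 0 := fun j _ => pow_ne_zero 2 (hp_prime j).pos.ne'
  have hs_cop : Set.Pairwise ↑S (Function.onFun Nat.Coprime s) := by
    intro j _ j' _ hne
    show Nat.Coprime (s j) (s j')
    exact Nat.Coprime.pow _ _ ((Nat.coprime_primes (hp_prime j) (hp_prime j')).mpr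
      (fun h => hne (hp_inj h)))
  obtain ⟨c, hc⟩ := Nat.chineseRemainderOfFinset a s S hs_ne hs_cop
  set M : ℕ := ∏ j ∈ S, s j with hMdef
  have hM0 : 0 < M := Finset.prod_pos fun j _ => pow_pos (hp_prime j).pos 2
  -- the infinite family of good N
  refine Set.infinite_of_injective_forall_mem
    (f := fun n : ℕ => c + (n+1) * M) ?_ ?_
  · intro n n' h
    simp only [add_right_inj] at h
    exact Nat.succ_injective (Nat.eq_of_mul_eq_mul_right hM0 h)
  intro n
  simp only [Set.mem_setOf_eq]
  set N : ℕ := c + (n+1) * M with hNdef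
  -- congruence satisfied by N
  have hNmod : ∀ j ∈ S, ((N : ℕ) : ZMod (s j)) = ρ j := by
    intro j hj
    haveI : NeZero (s j) := ⟨hs_ne j hj⟩
    have h1 : ((N : ℕ) : ZMod (s j)) = ((c : ℕ) : ZMod (s j)) := by
      have hdvd : s j ∣ M := Finset.dvd_prod_of_mem s hj
      rw [hNdef]
      push_cast
      rw [(ZMod.natCast_eq_zero_iff M (s j)).mpr hdvd]
      ring
    have h2 : ((c : ℕ) : ZMod (s j)) = ((a j : ℕ) : ZMod (s j)) :=
      (ZMod.natCast_eq_natCast_iff _ _ _).mpr (hc j hj)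
    rw [h1, h2, hadef]
    rw [ZMod.natCast_val, ZMod.cast_id]
  intro l l' hl hl' hlne
  simp only [Fin.sum_univ_three] at hl hl' ⊢
  by_contra hcon
  push_neg at hcon
  -- integer quantities
  set d0 : ℤ := l 0 - l' 0 with hd0
  set d1 : ℤ := l 1 - l' 1 with hd1
  set d2 : ℤ := l 2 - l' 2 with hd2
  set m : ℤ := l 0^2 + l 1^2 + l 2^2 with hm
  set m' : ℤ := l' 0^2 + l' 1^2 + l' 2^2 with hm'
  set Dz : ℤ := d0^2 + d1^2 + d2^2 with hDz
  set tt : ℤ := l 0 * d0 + l 1 * d1 + l 2 * d2 with htt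
  -- Dz ≥ 1
  have hDz1 : 1 ≤ Dz := by
    have hex : d0 ≠ 0 ∨ d1 ≠ 0 ∨ d2 ≠ 0 := by
      by_contra hno
      push_neg at hno
      apply hlne
      have e0 : l 0 = l' 0 := by have := hno.1; rw [hd0] at this; omega
      have e1 : l 1 = l' 1 := by have := hno.2.1; rw [hd1] at this; omega
      have e2 : l 2 = l' 2 := by have := hno.2.2; rw [hd2] at this; omega
      funext i
      fin_cases i
      · exact e0
      · exact e1
      · exact e2
    have h0 : ∀ z : ℤ, z ≠ 0 → 1 ≤ z^2 := by
      intro z hz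
      have h1 : 1 ≤ |z| := Int.one_le_abs hz
      calc (1:ℤ) = 1^2 := (one_pow 2).symm
        _ ≤ |z|^2 := pow_le_pow_left₀ (by norm_num) h1 2
        _ = z^2 := sq_abs z
    rw [hDz]
    rcases hex with h | h | h
    · linarith only [h0 _ h, sq_nonneg d1, sq_nonneg d2]
    · linarith only [h0 _ h, sq_nonneg d0, sq_nonneg d2]
    · linarith only [h0 _ h, sq_nonneg d0, sq_nonneg d1]
  -- Dz ≤ R
  have hsumnn : (0:ℝ) ≤ ((l 0 :ℝ) - l' 0)^2 + ((l 1 :ℝ) - l' 1)^2 + ((l 2 :ℝ) - l' 2)^2 := by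
    positivity
  have hDzR : Dz ≤ (R : ℤ) := by
    have hsq : ((l 0 :ℝ) - l' 0)^2 + ((l 1 :ℝ) - l' 1)^2 + ((l 2 :ℝ) - l' 2)^2 ≤ r^2 := by
      have heq := Real.sq_sqrt hsumnn
      have h2 : (Real.sqrt (((l 0 :ℝ) - l' 0)^2 + ((l 1 :ℝ) - l' 1)^2 + ((l 2 :ℝ) - l' 2)^2))^2
          ≤ r^2 := pow_le_pow_left₀ (Real.sqrt_nonneg _) hcon 2
      linarith only [heq, h2]
    have hcast : ((Dz : ℝ)) = ((l 0 :ℝ) - l' 0)^2 + ((l 1 :ℝ) - l' 1)^2 + ((l 2 :ℝ) - l' 2)^2 := by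
      rw [hDz, hd0, hd1, hd2]; push_cast; ring
    have : (Dz : ℝ) ≤ (R : ℝ) := by rw [hcast]; linarith only [hsq, hrR]
    exact_mod_cast this
  -- shell bounds
  have hmcast : (m : ℝ) = (l 0 : ℝ)^2 + (l 1 : ℝ)^2 + (l 2 : ℝ)^2 := by
    rw [hm]; push_cast; ring
  have hm'cast : (m' : ℝ) = (l' 0 : ℝ)^2 + (l' 1 : ℝ)^2 + (l' 2 : ℝ)^2 := by
    rw [hm']; push_cast; ring
  have hm1 : (N : ℤ) - k₀ ≤ m ∧ m ≤ (N : ℤ) + k₀ := by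
    constructor
    · have : ((N : ℝ)) - k₀ ≤ (m : ℝ) := by rw [hmcast]; push_cast; linarith only [hl.1, hkk₀, hkk₀']
      exact_mod_cast this
    · have : (m : ℝ) ≤ (N : ℝ) + k₀ := by rw [hmcast]; push_cast; linarith only [hl.2, hkk₀, hkk₀']
      exact_mod_cast this
  have hm2 : (N : ℤ) - k₀ ≤ m' ∧ m' ≤ (N : ℤ) + k₀ := by
    constructor
    · have : ((N : ℝ)) - k₀ ≤ (m' : ℝ) := by rw [hm'cast]; push_cast; linarith only [hl'.1, hkk₀, hkk₀']
      exact_mod_cast this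
    · have : (m' : ℝ) ≤ (N : ℝ) + k₀ := by rw [hm'cast]; push_cast; linarith only [hl'.2, hkk₀, hkk₀']
      exact_mod_cast this
  have hrel : m' = m - 2*tt + Dz := by rw [hm', hm, htt, hDz, hd0, hd1, hd2]; ring
  have httT : -(T:ℤ) ≤ tt ∧ tt ≤ (T:ℤ) := by
    have hT : (T:ℤ) = (k₀:ℤ) + (R:ℤ) := by rw [hTdef]; push_cast; ring
    omega
  -- the triple
  set i : ℕ := (m - (N:ℤ) + k₀).toNat with hidef
  have hiz : (i : ℤ) = m - (N:ℤ) + k₀ := Int.toNat_of_nonneg (by omega)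
  have hiS : i < 2*k₀+1 := by omega
  set D : ℕ := Dz.toNat with hDdef
  have hDzD : (D : ℤ) = Dz := Int.toNat_of_nonneg (by omega)
  have hD1 : 1 ≤ D := by omega
  have hDR : D ≤ R := by omega
  set j : ℕ × ℕ × ℤ := (i, D, tt) with hjdef
  have hjS : j ∈ S := by
    rw [hSdef]
    simp only [Finset.mem_product, Finset.mem_range, Finset.mem_Icc]
    exact ⟨hiS, ⟨hD1, hDR⟩, httT.1, httT.2⟩
  set P : ℕ := p j with hPdef2
  haveI hfact : Fact P.Prime := ⟨hp_prime j⟩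
  have hP2le : 2 ≤ P := (hp_prime j).two_le
  have hPR : R < P := hp_gt j
  -- x and the cross product
  set x : ℤ := m * Dz - tt^2 with hxdef
  set c1 : ℤ := l 1 * d2 - l 2 * d1 with hc1
  set c2 : ℤ := l 2 * d0 - l 0 * d2 with hc2
  set c3 : ℤ := l 0 * d1 - l 1 * d0 with hc3
  have hlagrange : x = c1^2 + c2^2 + c3^2 := by
    rw [hxdef, hc1, hc2, hc3, hm, hDz, htt]; ring
  have horth : c1 * d0 + c2 * d1 + c3 * d2 = 0 := by
    rw [hc1, hc2, hc3]; ring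
  -- the congruence x ≡ P mod P²
  have hsj : s j = P^2 := rfl
  have hDunit : IsUnit ((D : ℕ) : ZMod (P^2)) := by
    rw [ZMod.isUnit_iff_coprime]
    apply Nat.Coprime.pow_right
    have hnd : ¬ P ∣ D := by
      intro hdvd
      have := Nat.le_of_dvd (by omega) hdvd
      omega
    exact Nat.Coprime.symm ((Nat.Prime.coprime_iff_not_dvd (hp_prime j)).mpr hnd)
  have hDinv : ((D : ℕ) : ZMod (P^2)) * ((D : ℕ) : ZMod (P^2))⁻¹ = 1 :=
    ZMod.mul_inv_of_unit _ hDunit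
  have hxeq : x = ((N:ℤ) + (i:ℤ) - (k₀:ℤ)) * (D:ℤ) - tt^2 := by
    rw [hxdef, hDzD]
    have : m = (N:ℤ) + (i:ℤ) - (k₀:ℤ) := by omega
    rw [this]
  have hxmod : ((x : ℤ) : ZMod (P^2)) = ((P:ℕ) : ZMod (P^2)) := by
    have hN := hNmod j hjS
    rw [hxeq]
    push_cast
    rw [hN]
    have hρ : ρ j = ((D : ZMod (P^2)))⁻¹ * ((P : ZMod (P^2)) + (tt : ZMod (P^2))^2)
        + (k₀ : ZMod (P^2)) - (i : ZMod (P^2)) := rfl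
    rw [hρ]
    push_cast
    linear_combination ((P : ZMod (P^2)) + (tt : ZMod (P^2))^2) * hDinv
  -- P ∣ x but P² ∤ x
  have hPdvd : (P : ℤ) ∣ x := by
    have hPP : (P:ℕ) ∣ P^2 := dvd_pow_self P two_ne_zero
    have := congrArg (ZMod.castHom hPP (ZMod P)) hxmod
    rw [map_intCast, map_natCast, ZMod.natCast_self] at this
    exact_mod_cast (ZMod.intCast_zmod_eq_zero_iff_dvd x P).mp this
  have hP2ndvd : ¬ ((P : ℤ)^2 ∣ x) := by
    intro hdvd
    have h0 : ((x : ℤ) : ZMod (P^2)) = 0 := by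
      rw [ZMod.intCast_zmod_eq_zero_iff_dvd]
      exact_mod_cast hdvd
    rw [hxmod] at h0
    have hdd := (ZMod.natCast_eq_zero_iff P (P^2)).mp h0
    have h5 := Nat.le_of_dvd (by omega) hdd
    have h4 : 2*P ≤ P*P := Nat.mul_le_mul_right P hP2le
    have h6 : P^2 = P*P := by ring
    omega
  -- pass to ZMod P
  have hmod0 : ((c1 : ZMod P))^2 + ((c2 : ZMod P))^2 + ((c3 : ZMod P))^2 = 0 := by
    have : ((x : ℤ) : ZMod P) = 0 := (ZMod.intCast_zmod_eq_zero_iff_dvd x P).mpr hPdvd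
    rw [hlagrange] at this
    push_cast at this
    exact this
  have hmodorth : ((c1 : ZMod P)) * (d0 : ZMod P) + ((c2 : ZMod P)) * (d1 : ZMod P)
      + ((c3 : ZMod P)) * (d2 : ZMod P) = 0 := by
    have : ((c1 * d0 + c2 * d1 + c3 * d2 : ℤ) : ZMod P) = 0 := by rw [horth]; push_cast; ring
    push_cast at this
    exact this
  have hEcast : ((d0 : ZMod P))^2 + ((d1 : ZMod P))^2 + ((d2 : ZMod P))^2 = ((Dz : ℤ) : ZMod P) := by
    rw [hDz]; push_cast; ring
  have hE0 : ((d0 : ZMod P))^2 + ((d1 : ZMod P))^2 + ((d2 : ZMod P))^2 ≠ 0 := by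
    rw [hEcast]
    intro h0
    have := (ZMod.intCast_zmod_eq_zero_iff_dvd Dz P).mp h0
    have := Int.le_of_dvd (by omega) this
    omega
  have hEsq : IsSquare (((d0 : ZMod P))^2 + ((d1 : ZMod P))^2 + ((d2 : ZMod P))^2) := by
    rw [hEcast]
    have : ((Dz : ℤ) : ZMod P) = ((D : ℕ) : ZMod P) := by rw [← hDzD]; push_cast; ring
    rw [this]
    exact mps_isSquare_all (hp8 j) (hpq j) D (by omega) hDR
  have hneg : ¬ IsSquare (-1 : ZMod P) := by
    intro hsq
    have := ZMod.exists_sq_eq_neg_one_iff.mp hsq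
    have := hp8 j
    omega
  obtain ⟨hw1, hw2, hw3⟩ := mps_cross_lemma ((c1 : ZMod P)) ((c2 : ZMod P)) ((c3 : ZMod P))
    ((d0 : ZMod P)) ((d1 : ZMod P)) ((d2 : ZMod P)) hmod0 hmodorth hneg hEsq hE0
  have hd : ∀ z : ℤ, ((z : ZMod P) = 0) → (P:ℤ)^2 ∣ z^2 := by
    intro z hz
    have := (ZMod.intCast_zmod_eq_zero_iff_dvd z P).mp hz
    exact pow_dvd_pow_of_dvd this 2
  apply hP2ndvd
  rw [hlagrange]
  exact dvd_add (dvd_add (hd _ hw1) (hd _ hw2)) (hd _ hw3)
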